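/- Let V and W be finite-dimensional real inner product spaces, let J be a compatible complex structure on V, and let (e_1, …, e_n, η_1, η_2) be an orthonormal basis of V × W. Writing x¹ for the V-component of x ∈ V × W, one has Σ_{j=1}^{n} Σ_{k=1}^{2} ( ⟨e_j¹, η_k¹⟩² − ⟨e_j¹, J(η_k¹)⟩² ) = −‖η₁¹‖⁴ − ‖η₂¹‖⁴ − 2⟨η₁¹, η₂¹⟩² + 2⟨J(η₁¹), η₂¹⟩², this quantity is ≤ 0, and it equals 0 if and only if η₂¹ = J(η₁¹) or η₂¹ = −J(η₁¹). (This packages Equation (MAIND22) and the equality analysis in the proof of the paper's Lemma 3.4.) -/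

import Mathlib

open scoped RealInnerProductSpace

/-- Equation (MAIND22) and the equality analysis in the proof of the paper's Lemma 3.4. -/
theorem stmt_7 {V W : Type*} [NormedAddCommGroup V] [InnerProductSpace ℝ V]
    [FiniteDimensional ℝ V] [NormedAddCommGroup W] [InnerProductSpace ℝ W]
    [FiniteDimensional ℝ W] (J : V →ₗ[ℝ] V)
    (hJiso : ∀ x y : V, ⟪J x, J y⟫ = ⟪x, y⟫)
    (hJsq : ∀ x : V, J (J x) = -x)
    {n : ℕ} (b : OrthonormalBasis (Fin n ⊕ Fin 2) ℝ (WithLp 2 (V × W))) :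
    (∑ j : Fin n, ∑ k : Fin 2,
      (⟪(b (Sum.inl j)).fst, (b (Sum.inr k)).fst⟫ ^ 2
        - ⟪(b (Sum.inl j)).fst, J ((b (Sum.inr k)).fst)⟫ ^ 2)
      = -‖(b (Sum.inr 0)).fst‖ ^ 4 - ‖(b (Sum.inr 1)).fst‖ ^ 4
        - 2 * ⟪(b (Sum.inr 0)).fst, (b (Sum.inr 1)).fst⟫ ^ 2
        + 2 * ⟪J ((b (Sum.inr 0)).fst), (b (Sum.inr 1)).fst⟫ ^ 2)
    ∧ (-‖(b (Sum.inr 0)).fst‖ ^ 4 - ‖(b (Sum.inr 1)).fst‖ ^ 4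
        - 2 * ⟪(b (Sum.inr 0)).fst, (b (Sum.inr 1)).fst⟫ ^ 2
        + 2 * ⟪J ((b (Sum.inr 0)).fst), (b (Sum.inr 1)).fst⟫ ^ 2 ≤ 0)
    ∧ (-‖(b (Sum.inr 0)).fst‖ ^ 4 - ‖(b (Sum.inr 1)).fst‖ ^ 4
        - 2 * ⟪(b (Sum.inr 0)).fst, (b (Sum.inr 1)).fst⟫ ^ 2
        + 2 * ⟪J ((b (Sum.inr 0)).fst), (b (Sum.inr 1)).fst⟫ ^ 2 = 0
      ↔ (b (Sum.inr 1)).fst = J ((b (Sum.inr 0)).fst)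
        ∨ (b (Sum.inr 1)).fst = -(J ((b (Sum.inr 0)).fst))) := by
  -- basic J facts
  have hskew : ∀ x y : V, ⟪J x, y⟫ = -⟪x, J y⟫ := by
    intro x y
    have h := hJiso x (J y)
    rw [hJsq, inner_neg_right] at h
    linarith
  have hJ0 : ∀ x : V, ⟪x, J x⟫ = 0 := by
    intro x
    have h := hskew x x
    have h2 : ⟪J x, x⟫ = ⟪x, J x⟫ := real_inner_comm _ _
    linarith
  have hJnorm : ∀ x : V, ‖J x‖ ^ 2 = ‖x‖ ^ 2 := by
    intro x
    rw [← real_inner_self_eq_norm_sq, ← real_inner_self_eq_norm_sq, hJiso]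
  set u := (b (Sum.inr 0)).fst with hu
  set w := (b (Sum.inr 1)).fst with hw
  -- Parseval
  have key : ∀ v : V, ∑ j : Fin n, ⟪(b (Sum.inl j)).fst, v⟫ ^ 2
      = ‖v‖ ^ 2 - ∑ k : Fin 2, ⟪(b (Sum.inr k)).fst, v⟫ ^ 2 := by
    intro v
    have hp := b.sum_inner_mul_inner (WithLp.toLp 2 (v, (0 : W)))
      (WithLp.toLp 2 (v, (0 : W)))
    simp only [WithLp.prod_inner_apply, WithLp.ofLp_toLp, WithLp.ofLp_fst, WithLp.ofLp_snd, inner_zero_left, inner_zero_right, add_zero] at hp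
    have hp2 : ∑ i : Fin n ⊕ Fin 2, ⟪(b i).fst, v⟫ ^ 2 = ‖v‖ ^ 2 := by
      rw [← real_inner_self_eq_norm_sq, ← hp]
      refine Finset.sum_congr rfl fun i _ => ?_
      rw [real_inner_comm]; ring
    rw [Fintype.sum_sum_type] at hp2
    linarith
  have main : ∑ j : Fin n, ∑ k : Fin 2,
      (⟪(b (Sum.inl j)).fst, (b (Sum.inr k)).fst⟫ ^ 2
        - ⟪(b (Sum.inl j)).fst, J ((b (Sum.inr k)).fst)⟫ ^ 2)
      = -‖u‖ ^ 4 - ‖w‖ ^ 4 - 2 * ⟪u, w⟫ ^ 2 + 2 * ⟪J u, w⟫ ^ 2 := by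
    rw [Finset.sum_comm]
    have : ∀ k : Fin 2, ∑ j : Fin n,
        (⟪(b (Sum.inl j)).fst, (b (Sum.inr k)).fst⟫ ^ 2
          - ⟪(b (Sum.inl j)).fst, J ((b (Sum.inr k)).fst)⟫ ^ 2)
        = (‖(b (Sum.inr k)).fst‖ ^ 2 - ∑ l : Fin 2, ⟪(b (Sum.inr l)).fst, (b (Sum.inr k)).fst⟫ ^ 2)
          - (‖J ((b (Sum.inr k)).fst)‖ ^ 2
            - ∑ l : Fin 2, ⟪(b (Sum.inr l)).fst, J ((b (Sum.inr k)).fst)⟫ ^ 2) := by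
      intro k
      rw [Finset.sum_sub_distrib, key, key]
    rw [Finset.sum_congr rfl fun k _ => this k]
    simp only [Fin.sum_univ_two, ← hu, ← hw]
    rw [hJnorm u, hJnorm w]
    have h1 : ⟪u, J u⟫ = 0 := hJ0 u
    have h2 : ⟪w, J w⟫ = 0 := hJ0 w
    have h3 : ⟪u, J w⟫ = -⟪J u, w⟫ := by
      have := hskew u w; linarith
    have h4 : ⟪w, J u⟫ = ⟪J u, w⟫ := real_inner_comm _ _
    have h5 : ⟪w, u⟫ = ⟪u, w⟫ := real_inner_comm _ _
    have h6 : ⟪u, u⟫ = ‖u‖ ^ 2 := real_inner_self_eq_norm_sq u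
    have h7 : ⟪w, w⟫ = ‖w‖ ^ 2 := real_inner_self_eq_norm_sq w
    rw [h1, h2, h3, h4, h5, h6, h7]
    ring
  have hcs : ⟪J u, w⟫ ^ 2 ≤ ‖u‖ ^ 2 * ‖w‖ ^ 2 := by
    have h := abs_real_inner_le_norm (J u) w
    have h2 : ⟪J u, w⟫ ^ 2 ≤ (‖J u‖ * ‖w‖) ^ 2 := by
      rw [← sq_abs]
      exact pow_le_pow_left₀ (abs_nonneg _) h 2
    calc ⟪J u, w⟫ ^ 2 ≤ (‖J u‖ * ‖w‖) ^ 2 := h2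
      _ = ‖J u‖ ^ 2 * ‖w‖ ^ 2 := by ring
      _ = ‖u‖ ^ 2 * ‖w‖ ^ 2 := by rw [hJnorm]
  have hle : -‖u‖ ^ 4 - ‖w‖ ^ 4 - 2 * ⟪u, w⟫ ^ 2 + 2 * ⟪J u, w⟫ ^ 2 ≤ 0 := by
    nlinarith [sq_nonneg (‖u‖ ^ 2 - ‖w‖ ^ 2), sq_nonneg ⟪u, w⟫]
  refine ⟨main, hle, ?_, ?_⟩
  · -- forward
    intro heq
    clear main key hle
    have h1 : (‖u‖ ^ 2 - ‖w‖ ^ 2) ^ 2 + 2 * ⟪u, w⟫ ^ 2 ≤ 0 := by nlinarith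
    have ha : ⟪u, w⟫ = 0 := by
      have : ⟪u, w⟫ ^ 2 = 0 := by nlinarith [sq_nonneg (‖u‖ ^ 2 - ‖w‖ ^ 2), sq_nonneg ⟪u, w⟫]
      exact pow_eq_zero_iff two_ne_zero |>.mp this
    have hnw : ‖w‖ ^ 2 = ‖u‖ ^ 2 := by
      have : (‖u‖ ^ 2 - ‖w‖ ^ 2) ^ 2 = 0 := by
        nlinarith [sq_nonneg (‖u‖ ^ 2 - ‖w‖ ^ 2), sq_nonneg ⟪u, w⟫]
      have := pow_eq_zero_iff two_ne_zero |>.mp this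
      linarith
    have hw4 : ‖w‖ ^ 4 = ‖u‖ ^ 4 := by
      have : (‖w‖ ^ 2) ^ 2 = (‖u‖ ^ 2) ^ 2 := by rw [hnw]
      nlinarith
    have ha2 : ⟪u, w⟫ ^ 2 = 0 := by rw [ha]; ring
    have hc2 : ⟪J u, w⟫ ^ 2 = (‖u‖ ^ 2) ^ 2 := by nlinarith
    rcases sq_eq_sq_iff_eq_or_eq_neg.mp hc2 with hc | hc
    · left
      have hsub : ‖w - J u‖ ^ 2 = 0 := by
        rw [norm_sub_sq_real]
        have : ⟪w, J u⟫ = ⟪J u, w⟫ := real_inner_comm _ _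
        rw [this, hc, hJnorm]
        linarith
      have := pow_eq_zero_iff two_ne_zero |>.mp hsub
      rw [norm_eq_zero, sub_eq_zero] at this
      exact this
    · right
      have hsub : ‖w + J u‖ ^ 2 = 0 := by
        rw [norm_add_sq_real]
        have : ⟪w, J u⟫ = ⟪J u, w⟫ := real_inner_comm _ _
        rw [this, hc, hJnorm]
        linarith
      have := pow_eq_zero_iff two_ne_zero |>.mp hsub
      rw [norm_eq_zero] at this
      have := eq_neg_of_add_eq_zero_left this
      simpa using this
  · -- backward
    clear main key hle
    have h4 : ‖J u‖ ^ 4 = ‖u‖ ^ 4 := by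
      have h2 := hJnorm u
      nlinarith
    rintro (h | h)
    · rw [h, hJ0, h4, real_inner_self_eq_norm_sq, hJnorm]
      ring
    · rw [h, inner_neg_right, hJ0, norm_neg, h4, inner_neg_right,
        real_inner_self_eq_norm_sq, hJnorm]
      ring
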